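/- Let 0 ≤ k_- ≤ k_+ ≤ 3 with k_+ + k_- ≥ 1, α = max(2k_+^2, 3), D ≥ 2, K ≥ 1 integers, and p ≡ ±5 (mod 12) a prime with (αK+1)^D ≤ p. For 0 ≤ m < DK^2, let C_m = {Σ_{i=0}^{D-1} x_i(αK+1)^i : 0 ≤ x_i ≤ K, Σ x_i^2 = m}. In G = Z_{3k_+ + 2k_- + 1} × Z_p × Z_p, let S_m = {(1, x, x^2 mod p) : x ∈ C_m}. Then M = [-k_-,k_+]\{0} partially 2-splits G with splitter set S_m. -/

import Mathlib

/-- Hamming weight of a vector. -/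
def wt {n : ℕ} {α : Type*} [Zero α] [DecidableEq α] (e : Fin n → α) : ℕ :=
  (Finset.univ.filter fun i => e i ≠ 0).card

instance : Fact (Nat.Prime 3) := ⟨by norm_num⟩

lemma leg32 : legendreSym 3 (2:ℤ) = -1 := by decide
lemma leg31 : legendreSym 3 (1:ℤ) = 1 := by decide

lemma noSq3 (p : ℕ) (hp : p.Prime) (hp12 : p % 12 = 5 ∨ p % 12 = 7) :
    ¬ IsSquare (3 : ZMod p) := by
  have : Fact p.Prime := ⟨hp⟩
  have hp2 : p ≠ 2 := by rintro rfl; omega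
  have hp3' : p ≠ 3 := by rintro rfl; omega
  have h3 : legendreSym p ((3:ℕ):ℤ) = -1 := by
    rw [legendreSym.quadratic_reciprocity' (by norm_num) hp2]
    have hmod : legendreSym 3 (p:ℤ) = legendreSym 3 ((p:ℤ) % 3) := legendreSym.mod 3 (p:ℤ)
    have h32 : (3:ℕ) / 2 = 1 := by norm_num
    rcases hp12 with h | h
    · have hdiv : (p / 2) % 2 = 0 := by omega
      have h1 : (-1 : ℤ) ^ ((3:ℕ) / 2 * (p / 2)) = 1 := by
        rw [h32, one_mul]
        exact Even.neg_one_pow (Nat.even_iff.mpr hdiv)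
      have h2 : legendreSym 3 (p:ℤ) = -1 := by
        rw [hmod]
        have hq : (p : ℤ) % 3 = 2 := by omega
        rw [hq]; exact leg32
      rw [h1, h2]; ring
    · have hdiv : (p / 2) % 2 = 1 := by omega
      have h1 : (-1 : ℤ) ^ ((3:ℕ) / 2 * (p / 2)) = -1 := by
        rw [h32, one_mul]
        exact Odd.neg_one_pow (Nat.odd_iff.mpr hdiv)
      have h2 : legendreSym 3 (p:ℤ) = 1 := by
        rw [hmod]
        have hq : (p : ℤ) % 3 = 1 := by omega
        rw [hq]; exact leg31
      rw [h1, h2]; ring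
  have h4 := (legendreSym.eq_neg_one_iff p (a := ((3:ℕ):ℤ))).mp h3
  have hc : (((3:ℕ):ℤ) : ZMod p) = (3 : ZMod p) := by push_cast; ring
  rwa [hc] at h4
open Finset

section Helpers

lemma evalZero : ∀ (D : ℕ) (β : ℤ) (g : Fin D → ℤ), (∀ j, |g j| < β) →
    (∑ j, g j * β ^ (j:ℕ)) = 0 → ∀ j, g j = 0 := by
  intro D
  induction D with
  | zero => intro β g _ _ j; exact absurd j.2 (by omega)
  | succ D ih =>
    intro β g hb hs j
    have hβ : 0 < β := lt_of_le_of_lt (abs_nonneg _) (hb 0)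
    have hs' : g 0 + β * ∑ j : Fin D, g j.succ * β ^ (j:ℕ) = 0 := by
      rw [Fin.sum_univ_succ] at hs
      rw [← hs]
      rw [Finset.mul_sum]
      congr 1
      · norm_num
      · apply Finset.sum_congr rfl
        intro i _
        push_cast [Fin.val_succ]
        ring
    have hdvd : β ∣ g 0 := ⟨-(∑ j : Fin D, g j.succ * β ^ (j:ℕ)), by linarith⟩
    have h0 : g 0 = 0 := Int.eq_zero_of_abs_lt_dvd hdvd (hb 0)
    have hrest : (∑ j : Fin D, g j.succ * β ^ (j:ℕ)) = 0 := by
      have h1 : β * ∑ j : Fin D, g j.succ * β ^ (j:ℕ) = 0 := by rw [h0] at hs'; linarith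
      exact (mul_eq_zero.mp h1).resolve_left (by omega)
    have hind := ih β (fun j => g j.succ) (fun j => hb j.succ) hrest
    rcases Fin.eq_zero_or_eq_succ j with rfl | ⟨k, rfl⟩
    · exact h0
    · exact hind k

lemma geomId (β : ℤ) (D : ℕ) : (β - 1) * ∑ j : Fin D, β ^ (j:ℕ) = β ^ D - 1 := by
  rw [Fin.sum_univ_eq_sum_range (fun j => β ^ j), mul_comm]
  exact geom_sum_mul β D

lemma evalNonneg {D : ℕ} (β : ℤ) (hβ : 0 ≤ β) (g : Fin D → ℤ) (h : ∀ j, 0 ≤ g j) :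
    0 ≤ ∑ j, g j * β ^ (j:ℕ) :=
  Finset.sum_nonneg fun j _ => mul_nonneg (h j) (pow_nonneg hβ _)

lemma evalLe {D : ℕ} (β : ℤ) (hβ : 0 ≤ β) (g : Fin D → ℤ) (K : ℤ) (h : ∀ j, g j ≤ K) :
    ∑ j, g j * β ^ (j:ℕ) ≤ K * ∑ j : Fin D, β ^ (j:ℕ) := by
  rw [Finset.mul_sum]
  exact Finset.sum_le_sum fun j _ => mul_le_mul_of_nonneg_right (h j) (pow_nonneg hβ _)

lemma evalComb {D : ℕ} (B w1 w2 w3 w4 : ℤ) (F1 F2 F3 F4 : Fin D → ℤ) :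
    ∑ j, (w1 * F1 j + w2 * F2 j + w3 * F3 j + w4 * F4 j) * B ^ (j:ℕ)
      = w1 * (∑ j, F1 j * B ^ (j:ℕ)) + w2 * (∑ j, F2 j * B ^ (j:ℕ))
        + w3 * (∑ j, F3 j * B ^ (j:ℕ)) + w4 * (∑ j, F4 j * B ^ (j:ℕ)) := by
  simp only [Finset.mul_sum, ← Finset.sum_add_distrib]
  exact Finset.sum_congr rfl fun j _ => by ring

lemma mul_bnd (w f M : ℤ) (h1 : 0 ≤ f) (h2 : f ≤ M) :
    min w 0 * M ≤ w * f ∧ w * f ≤ max w 0 * M := by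
  rcases le_total w 0 with hw | hw
  · rw [min_eq_left hw, max_eq_right hw]
    exact ⟨by nlinarith, by nlinarith⟩
  · rw [min_eq_right hw, max_eq_left hw]
    exact ⟨by nlinarith, by nlinarith⟩

lemma comb_bound (kp km M a b c d f1 f2 f3 f4 : ℤ)
    (hkm : 0 ≤ km) (hkmkp : km ≤ kp)
    (ha : -km ≤ a ∧ a ≤ kp) (hb : -km ≤ b ∧ b ≤ kp)
    (hc : -km ≤ c ∧ c ≤ kp) (hd : -km ≤ d ∧ d ≤ kp)
    (hsum : a + b = c + d)
    (h1 : 0 ≤ f1 ∧ f1 ≤ M) (h2 : 0 ≤ f2 ∧ f2 ≤ M)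
    (h3 : 0 ≤ f3 ∧ f3 ≤ M) (h4 : 0 ≤ f4 ∧ f4 ≤ M) :
    |a * f1 + b * f2 - c * f3 - d * f4| ≤ 2 * kp * M := by
  have hM : 0 ≤ M := le_trans h1.1 h1.2
  have B1 := mul_bnd a f1 M h1.1 h1.2
  have B2 := mul_bnd b f2 M h2.1 h2.2
  have B3 := mul_bnd (-c) f3 M h3.1 h3.2
  have B4 := mul_bnd (-d) f4 M h4.1 h4.2
  have hup : max a 0 + max b 0 + max (-c) 0 + max (-d) 0 ≤ 2 * kp := by omega
  have hlo : -(2 * kp) ≤ min a 0 + min b 0 + min (-c) 0 + min (-d) 0 := by omega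
  have hup' := mul_le_mul_of_nonneg_right hup hM
  have hlo' := mul_le_mul_of_nonneg_right hlo hM
  rw [abs_le]
  constructor <;> nlinarith [B1.1, B1.2, B2.1, B2.2, B3.1, B3.2, B4.1, B4.2]

lemma lin_abs_le (A r u1 u2 M : ℤ) (h1 : |u1| ≤ M) (h2 : |u2| ≤ M) :
    |A * u1 - r * u2| ≤ (|A| + |r|) * M :=
  calc |A * u1 - r * u2| ≤ |A * u1| + |r * u2| := abs_sub _ _
    _ = |A| * |u1| + |r| * |u2| := by rw [abs_mul, abs_mul]
    _ ≤ |A| * M + |r| * M := add_le_add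
        (mul_le_mul_of_nonneg_left h1 (abs_nonneg A))
        (mul_le_mul_of_nonneg_left h2 (abs_nonneg r))
    _ = (|A| + |r|) * M := by ring

lemma normc {D : ℕ} (F G : Fin D → ℤ) (h : ∑ j, (F j)^2 = ∑ j, (G j)^2) :
    2 * (∑ j, G j * (F j - G j)) + ∑ j, (F j - G j)^2 = 0 := by
  have key : ∑ j, (2 * (G j * (F j - G j)) + (F j - G j)^2) = ∑ j, ((F j)^2 - (G j)^2) :=
    Finset.sum_congr rfl fun j _ => by ring
  rw [Finset.sum_add_distrib] at key
  rw [Finset.sum_sub_distrib] at key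
  rw [← Finset.mul_sum] at key
  omega

lemma sqsum {D : ℕ} (φ : Fin D → ℤ) (h : ∑ j, (φ j)^2 = 0) : ∀ j, φ j = 0 := by
  intro j
  have h1 := (Finset.sum_eq_zero_iff_of_nonneg (fun i _ => sq_nonneg (φ i))).mp h j (Finset.mem_univ j)
  exact pow_eq_zero_iff (by norm_num) |>.mp h1

lemma sum_pt {D : ℕ} (f g : Fin D → ℤ) (h : ∀ j, f j = g j) : ∑ j, f j = ∑ j, g j :=
  Finset.sum_congr rfl fun j _ => h j

/-- key quadratic-form algebra: if `A' • φ = r' • ψ` pointwise and both satisfy the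
norm condition relative to `h`, then `r' (A' - r') ‖ψ‖² = 0`. -/
lemma PAR {D : ℕ} (A r : ℤ) (φ ψ h : Fin D → ℤ)
    (hpar : ∀ j, A * φ j = r * ψ j)
    (n1 : 2 * (∑ j, h j * φ j) + ∑ j, (φ j)^2 = 0)
    (n2 : 2 * (∑ j, h j * ψ j) + ∑ j, (ψ j)^2 = 0) :
    r * (A - r) * ∑ j, (ψ j)^2 = 0 := by
  have e1 : A^2 * ∑ j, (φ j)^2 = r^2 * ∑ j, (ψ j)^2 := by
    rw [Finset.mul_sum, Finset.mul_sum]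
    exact Finset.sum_congr rfl fun j _ => by
      have hj := hpar j; linear_combination (A * φ j + r * ψ j) * hj
  have e2 : A * ∑ j, h j * φ j = r * ∑ j, h j * ψ j := by
    rw [Finset.mul_sum, Finset.mul_sum]
    exact Finset.sum_congr rfl fun j _ => by
      have hj := hpar j; linear_combination (h j) * hj
  have e3 : A * ∑ j, (φ j)^2 = r * ∑ j, (ψ j)^2 := by linear_combination A * n1 - r * n2 - 2 * e2
  linear_combination e1 - A * e3

end Helpers
section Deg

set_option maxHeartbeats 2000000 in
lemma DEG (p : ℕ) (hp : p.Prime)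
    (kp km K α B : ℤ) (D : ℕ) (hD : 1 ≤ D)
    (hα3 : 3 ≤ α) (h2kp : 2*kp ≤ α) (hkp1 : 1 ≤ kp) (hkp3 : kp ≤ 3)
    (hkm0 : 0 ≤ km) (hkmkp : km ≤ kp) (hK : 1 ≤ K) (hB : B = α*K + 1)
    (hpB : B^D ≤ (p:ℤ))
    (F1 F2 F3 F4 : Fin D → ℤ)
    (hF1 : ∀ j, 0 ≤ F1 j ∧ F1 j ≤ K) (hF2 : ∀ j, 0 ≤ F2 j ∧ F2 j ≤ K)
    (hF3 : ∀ j, 0 ≤ F3 j ∧ F3 j ≤ K) (hF4 : ∀ j, 0 ≤ F4 j ∧ F4 j ≤ K)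
    (hm14 : ∑ j, (F1 j)^2 = ∑ j, (F4 j)^2)
    (hm34 : ∑ j, (F3 j)^2 = ∑ j, (F4 j)^2)
    (a b : ℤ) (ha0 : a ≠ 0) (hb0 : b ≠ 0)
    (haB : -km ≤ a ∧ a ≤ kp) (hbB : -km ≤ b ∧ b ≤ kp)
    (v1 v2 v3 v4 : ℤ)
    (hv1 : v1 = ∑ j, F1 j * B ^ (j:ℕ)) (hv2 : v2 = ∑ j, F2 j * B ^ (j:ℕ))
    (hv3 : v3 = ∑ j, F3 j * B ^ (j:ℕ)) (hv4 : v4 = ∑ j, F4 j * B ^ (j:ℕ))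
    (h13 : v1 ≠ v3) (h14 : v1 ≠ v4) (h34 : v3 ≠ v4)
    (hlin : a*v1 + b*v2 = a*v3 + b*v4)
    (hquad : (p:ℤ) ∣ (a*v1^2 + b*v2^2 - a*v3^2 - b*v4^2)) : False := by
  have hpI : Prime (p:ℤ) := Int.prime_iff_natAbs_prime.mpr (by simpa using hp)
  have hK0 : (0:ℤ) ≤ K := by linarith
  have hB4 : (4:ℤ) ≤ B := by clear * - hα3 hK hB; nlinarith
  have hpbig : (4:ℤ) ≤ p := by
    calc (4:ℤ) ≤ B := hB4
    _ ≤ B^D := le_self_pow₀ (by linarith) (by omega)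
    _ ≤ p := hpB
  -- geometric quantities
  set E : ℤ := ∑ j : Fin D, B ^ (j:ℕ) with hE
  have hE0 : 0 ≤ E := Finset.sum_nonneg fun j _ => pow_nonneg (by linarith) _
  set Mx : ℤ := K * E with hMxdef
  have hMx0 : 0 ≤ Mx := mul_nonneg hK0 hE0
  have hgeom : (B - 1) * E = B^D - 1 := geomId B D
  have hMx : α * Mx = B^D - 1 := by
    have : α * Mx = (B - 1) * E := by rw [hMxdef, hB]; ring
    rw [this, hgeom]
  have hαMxp : α * Mx < (p:ℤ) := by rw [hMx]; linarith
  have hcbK : 2*kp*K ≤ α*K := mul_le_mul_of_nonneg_right h2kp hK0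
  have h2K : 2*K ≤ α*K := mul_le_mul_of_nonneg_right (by linarith) hK0
  have hMxα : Mx ≤ α * Mx := by clear * - hα3 hMx0; nlinarith
  have h2Mxα : 2*Mx ≤ α * Mx := by clear * - hα3 hMx0; nlinarith
  have hzero : ∀ t : ℤ, (p:ℤ) ∣ t → |t| ≤ α * Mx → t = 0 := fun t ht habs =>
    Int.eq_zero_of_abs_lt_dvd ht (lt_of_le_of_lt habs hαMxp)
  -- v bounds
  have hv1b : 0 ≤ v1 ∧ v1 ≤ Mx := by
    rw [hv1]; exact ⟨evalNonneg B (by linarith) F1 (fun j => (hF1 j).1),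
      evalLe B (by linarith) F1 K (fun j => (hF1 j).2)⟩
  have hv2b : 0 ≤ v2 ∧ v2 ≤ Mx := by
    rw [hv2]; exact ⟨evalNonneg B (by linarith) F2 (fun j => (hF2 j).1),
      evalLe B (by linarith) F2 K (fun j => (hF2 j).2)⟩
  have hv3b : 0 ≤ v3 ∧ v3 ≤ Mx := by
    rw [hv3]; exact ⟨evalNonneg B (by linarith) F3 (fun j => (hF3 j).1),
      evalLe B (by linarith) F3 K (fun j => (hF3 j).2)⟩
  have hv4b : 0 ≤ v4 ∧ v4 ≤ Mx := by
    rw [hv4]; exact ⟨evalNonneg B (by linarith) F4 (fun j => (hF4 j).1),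
      evalLe B (by linarith) F4 K (fun j => (hF4 j).2)⟩
  -- digitwise linear relation
  have hdig : ∀ j, a * F1 j + b * F2 j + (-a) * F3 j + (-b) * F4 j = 0 := by
    apply evalZero D B
    · intro j
      have hcb := comb_bound kp km K a b a b (F1 j) (F2 j) (F3 j) (F4 j)
        hkm0 hkmkp haB hbB haB hbB rfl (hF1 j) (hF2 j) (hF3 j) (hF4 j)
      have : a * F1 j + b * F2 j + (-a) * F3 j + (-b) * F4 j
          = a * F1 j + b * F2 j - a * F3 j - b * F4 j := by ring
      rw [this]
      calc |a * F1 j + b * F2 j - a * F3 j - b * F4 j| ≤ 2*kp*K := hcb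
        _ < B := by rw [hB]; linarith
    · rw [evalComb, ← hv1, ← hv2, ← hv3, ← hv4]; linarith
  -- quadratic in u
  have hlin_u : a*(v1 - v4) + b*(v2 - v4) = a*(v3 - v4) := by linear_combination hlin
  have hquad_u : (p:ℤ) ∣ (a*(v1-v4)^2 + b*(v2-v4)^2 - a*(v3-v4)^2) := by
    have hiden : a*(v1-v4)^2 + b*(v2-v4)^2 - a*(v3-v4)^2
        = a*v1^2 + b*v2^2 - a*v3^2 - b*v4^2 := by linear_combination (-2*v4) * hlin
    rw [hiden]; exact hquad
  have hfac : a*((v1-v4) - (v3-v4)) * ((v1-v4) + (v3-v4) - (v2-v4))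
      = a*(v1-v4)^2 + b*(v2-v4)^2 - a*(v3-v4)^2 := by
    linear_combination (-(v2-v4)) * hlin_u
  have hdvdfac : (p:ℤ) ∣ a*((v1-v4) - (v3-v4)) * ((v1-v4) + (v3-v4) - (v2-v4)) := by
    rw [hfac]; exact hquad_u
  -- p cannot divide a nor v1 - v3
  have hw : (v1 - v4) + (v3 - v4) - (v2 - v4) = 0 := by
    rcases hpI.dvd_mul.mp hdvdfac with h | h
    · exfalso
      rcases hpI.dvd_mul.mp h with h' | h'
      · have habs : (p:ℤ) ∣ |a| := (dvd_abs _ _).mpr h'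
        have := Int.le_of_dvd (abs_pos.mpr ha0) habs
        have : |a| ≤ kp := abs_le.mpr ⟨by linarith [haB.1], haB.2⟩
        omega
      · have h0 : (v1 - v4) - (v3 - v4) = 0 := by
          apply hzero _ h'
          rw [abs_le]
          constructor
          · linarith [hv1b.1, hv3b.2]
          · linarith [hv1b.2, hv3b.1]
        exact h13 (by linarith)
    · apply hzero _ h
      rw [abs_le]
      constructor
      · linarith [hv1b.1, hv2b.2, hv3b.1, hv4b.2]
      · linarith [hv1b.2, hv2b.1, hv3b.2, hv4b.1]
  -- digitwise: F1 + F3 - F2 - F4 = 0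
  have hdig3 : ∀ j, (1:ℤ) * F1 j + (-1) * F2 j + (1:ℤ) * F3 j + (-1) * F4 j = 0 := by
    apply evalZero D B
    · intro j
      have e1 := hF1 j; have e2 := hF2 j; have e3 := hF3 j; have e4 := hF4 j
      rw [abs_lt]
      constructor
      · linarith [e1.1, e2.2, e3.1, e4.2]
      · linarith [e1.2, e2.1, e3.2, e4.1]
    · rw [evalComb, ← hv1, ← hv2, ← hv3, ← hv4]; linarith
  -- pointwise relations
  have hpt : ∀ j, a * (F1 j - F4 j) + b * (F2 j - F4 j) = a * (F3 j - F4 j) := by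
    intro j; linear_combination hdig j
  have hAr : ∀ j, (a+b) * (F1 j - F4 j) = (a-b) * (F3 j - F4 j) := by
    intro j; linear_combination hpt j + b * hdig3 j
  -- norm conditions
  have n1 := normc F1 F4 hm14
  have n3 := normc F3 F4 hm34
  have hPAR := PAR (a+b) (a-b) (fun j => F1 j - F4 j) (fun j => F3 j - F4 j) F4
    hAr n1 n3
  -- u values from φ sums
  have hu1 : v1 - v4 = ∑ j, (F1 j - F4 j) * B ^ (j:ℕ) := by
    rw [hv1, hv4, ← Finset.sum_sub_distrib]
    exact Finset.sum_congr rfl fun j _ => by ring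
  have hu3 : v3 - v4 = ∑ j, (F3 j - F4 j) * B ^ (j:ℕ) := by
    rw [hv3, hv4, ← Finset.sum_sub_distrib]
    exact Finset.sum_congr rfl fun j _ => by ring
  rcases mul_eq_zero.mp hPAR with hc1 | hc2
  · -- (a-b) * (a+b-(a-b)) = 0, i.e. a = b or b = 0
    have : (a - b) * (2*b) = 0 := by linear_combination hc1
    rcases mul_eq_zero.mp this with hab | hbb
    · -- a = b : then (2a) φ1 = 0 pointwise, so v1 = v4
      have hab' : a = b := by linarith
      have hφ1 : ∀ j, F1 j - F4 j = 0 := by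
        intro j
        have := hAr j
        rw [hab'] at this
        have h2b : b + b ≠ 0 := by intro hcon; apply hb0; linarith
        have : (b + b) * (F1 j - F4 j) = 0 := by linear_combination this
        exact (mul_eq_zero.mp this).resolve_left h2b
      apply h14
      have : v1 - v4 = 0 := by
        rw [hu1]
        exact Finset.sum_eq_zero fun j _ => by rw [hφ1 j]; ring
      linarith
    · exact hb0 (by linarith)
  · -- ‖φ3‖² = 0 : v3 = v4
    apply h34
    have hz : ∀ j, F3 j - F4 j = 0 := sqsum _ hc2
    have : v3 - v4 = 0 := by
      rw [hu3]
      exact Finset.sum_eq_zero fun j _ => by rw [hz j]; ring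
    linarith

end Deg
section Cls

def CheckRoot (a c r α : ℤ) : Prop :=
  (Int.gcd (a*(c-a)) r : ℤ) ≤ α^2 ∧
    |a*(c-a) / (Int.gcd (a*(c-a)) r : ℤ)| + |r / (Int.gcd (a*(c-a)) r : ℤ)| ≤ α

instance (a c r α : ℤ) : Decidable (CheckRoot a c r α) := by unfold CheckRoot; infer_instance

def CLS (kp km α : ℤ) : Prop :=
  ∀ a ∈ Finset.Icc (-km) kp, ∀ b ∈ Finset.Icc (-km) kp,
  ∀ c ∈ Finset.Icc (-km) kp, ∀ d ∈ Finset.Icc (-km) kp,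
  a ≠ 0 → b ≠ 0 → c ≠ 0 → d ≠ 0 → a + b = c + d → c ≠ a → c ≠ b →
    (a*b*c*d < 0
    ∨ (∃ k ∈ Finset.Icc 1 (kp^2), a*b*c*d = 3*k^2 ∧ 2*k ≤ α)
    ∨ (∃ k ∈ Finset.Icc 1 (kp^2), a*b*c*d = k^2 ∧
        CheckRoot a c (a*b-k) α ∧ CheckRoot a c (a*b+k) α))

noncomputable instance (kp km α : ℤ) : Decidable (CLS kp km α) := by unfold CLS; infer_instance

set_option maxRecDepth 10000 in
lemma cls_all : ∀ kp ∈ Finset.Icc (1:ℤ) 3, ∀ km ∈ Finset.Icc (0:ℤ) kp,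
    CLS kp km (max (2*kp^2) 3) := by decide

end Cls

section Four

set_option maxHeartbeats 4000000 in
lemma FOUR (p : ℕ) (hp : p.Prime) (hsq3 : ¬ IsSquare (3 : ZMod p))
    (kp km K α B : ℤ) (D : ℕ) (hD : 2 ≤ D)
    (hα : α = max (2*kp^2) 3) (hkp1 : 1 ≤ kp) (hkp3 : kp ≤ 3)
    (hkm0 : 0 ≤ km) (hkmkp : km ≤ kp) (hK : 1 ≤ K) (hB : B = α*K + 1)
    (hpB : B^D ≤ (p:ℤ))
    (F1 F2 F3 F4 : Fin D → ℤ)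
    (hF1 : ∀ j, 0 ≤ F1 j ∧ F1 j ≤ K) (hF2 : ∀ j, 0 ≤ F2 j ∧ F2 j ≤ K)
    (hF3 : ∀ j, 0 ≤ F3 j ∧ F3 j ≤ K) (hF4 : ∀ j, 0 ≤ F4 j ∧ F4 j ≤ K)
    (hm14 : ∑ j, (F1 j)^2 = ∑ j, (F4 j)^2)
    (hm24 : ∑ j, (F2 j)^2 = ∑ j, (F4 j)^2)
    (hm34 : ∑ j, (F3 j)^2 = ∑ j, (F4 j)^2)
    (a b c d : ℤ) (ha0 : a ≠ 0) (hb0 : b ≠ 0) (hc0 : c ≠ 0) (hd0 : d ≠ 0)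
    (haB : -km ≤ a ∧ a ≤ kp) (hbB : -km ≤ b ∧ b ≤ kp)
    (hcB : -km ≤ c ∧ c ≤ kp) (hdB : -km ≤ d ∧ d ≤ kp)
    (hsum : a + b = c + d)
    (v1 v2 v3 v4 : ℤ)
    (hv1 : v1 = ∑ j, F1 j * B ^ (j:ℕ)) (hv2 : v2 = ∑ j, F2 j * B ^ (j:ℕ))
    (hv3 : v3 = ∑ j, F3 j * B ^ (j:ℕ)) (hv4 : v4 = ∑ j, F4 j * B ^ (j:ℕ))
    (h12 : v1 ≠ v2) (h13 : v1 ≠ v3) (h14 : v1 ≠ v4)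
    (h23 : v2 ≠ v3) (h24 : v2 ≠ v4) (h34 : v3 ≠ v4)
    (hlin : a*v1 + b*v2 = c*v3 + d*v4)
    (hquad : (p:ℤ) ∣ (a*v1^2 + b*v2^2 - c*v3^2 - d*v4^2)) : False := by
  have hpI : Prime (p:ℤ) := Int.prime_iff_natAbs_prime.mpr (by simpa using hp)
  have hα3 : (3:ℤ) ≤ α := by rw [hα]; exact le_max_right _ _
  have h2kp : 2*kp ≤ α := by
    rw [hα]
    rcases le_or_gt kp 1 with h | h
    · calc 2*kp ≤ 3 := by clear * - h hkp1; linarith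
        _ ≤ max (2*kp^2) 3 := le_max_right _ _
    · calc 2*kp ≤ 2*kp^2 := by clear * - h; nlinarith
        _ ≤ max (2*kp^2) 3 := le_max_left _ _
  have hK0 : (0:ℤ) ≤ K := by linarith
  have hB4 : (4:ℤ) ≤ B := by clear * - hα3 hK hB; nlinarith
  have hBα : α + 1 ≤ B := by clear * - hα3 hK hB; nlinarith
  have hB2D : B^2 ≤ B^D := pow_le_pow_right₀ (by clear * - hB4; linarith) hD
  have hα2B2 : α^2 < B^2 := by clear * - hα3 hBα; nlinarith
  have hα2p : α^2 < (p:ℤ) := by clear * - hα2B2 hB2D hpB; linarith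
  have hαp : α < (p:ℤ) := by clear * - hα3 hα2p; nlinarith
  have hpbig : (16:ℤ) ≤ p := by clear * - hB4 hB2D hpB; nlinarith
  -- geometric quantities
  have hE0 : (0:ℤ) ≤ ∑ j : Fin D, B ^ (j:ℕ) :=
    Finset.sum_nonneg fun j _ => pow_nonneg (by linarith) _
  have hMx0 : (0:ℤ) ≤ K * ∑ j : Fin D, B ^ (j:ℕ) := mul_nonneg hK0 hE0
  have hgeom : (B - 1) * ∑ j : Fin D, B ^ (j:ℕ) = B^D - 1 := geomId B D
  have hMx : α * (K * ∑ j : Fin D, B ^ (j:ℕ)) = B^D - 1 := by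
    rw [← hgeom, hB]; ring
  set Mx : ℤ := K * ∑ j : Fin D, B ^ (j:ℕ) with hMxdef
  have hαMxp : α * Mx < (p:ℤ) := by rw [hMx]; linarith
  have hMxα : Mx ≤ α * Mx := by clear * - hα3 hMx0; nlinarith
  have h2Mxα : 2*Mx ≤ α * Mx := by clear * - hα3 hMx0; nlinarith
  have hcbK : 2*kp*K ≤ α*K := mul_le_mul_of_nonneg_right h2kp hK0
  have hzero : ∀ t : ℤ, (p:ℤ) ∣ t → |t| ≤ α * Mx → t = 0 := fun t ht habs =>
    Int.eq_zero_of_abs_lt_dvd ht (lt_of_le_of_lt habs hαMxp)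
  -- v bounds
  have hv1b : 0 ≤ v1 ∧ v1 ≤ Mx := by
    rw [hv1]; exact ⟨evalNonneg B (by linarith) F1 (fun j => (hF1 j).1),
      evalLe B (by linarith) F1 K (fun j => (hF1 j).2)⟩
  have hv2b : 0 ≤ v2 ∧ v2 ≤ Mx := by
    rw [hv2]; exact ⟨evalNonneg B (by linarith) F2 (fun j => (hF2 j).1),
      evalLe B (by linarith) F2 K (fun j => (hF2 j).2)⟩
  have hv3b : 0 ≤ v3 ∧ v3 ≤ Mx := by
    rw [hv3]; exact ⟨evalNonneg B (by linarith) F3 (fun j => (hF3 j).1),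
      evalLe B (by linarith) F3 K (fun j => (hF3 j).2)⟩
  have hv4b : 0 ≤ v4 ∧ v4 ≤ Mx := by
    rw [hv4]; exact ⟨evalNonneg B (by linarith) F4 (fun j => (hF4 j).1),
      evalLe B (by linarith) F4 K (fun j => (hF4 j).2)⟩
  have hu1abs : |v1 - v4| ≤ Mx := abs_le.mpr ⟨by linarith [hv1b.1, hv4b.2], by linarith [hv1b.2, hv4b.1]⟩
  have hu2abs : |v2 - v4| ≤ Mx := abs_le.mpr ⟨by linarith [hv2b.1, hv4b.2], by linarith [hv2b.2, hv4b.1]⟩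
  -- case c = a
  by_cases hca : c = a
  · have hdb : d = b := by omega
    rw [hca, hdb] at hlin hquad
    exact DEG p hp kp km K α B D (by omega) hα3 h2kp hkp1 hkp3 hkm0 hkmkp hK hB hpB
      F1 F2 F3 F4 hF1 hF2 hF3 hF4 hm14 hm34 a b ha0 hb0 haB hbB
      v1 v2 v3 v4 hv1 hv2 hv3 hv4 h13 h14 h34 hlin hquad
  by_cases hcb : c = b
  · have hda : d = a := by omega
    have hlin' : a*v1 + b*v2 = a*v4 + b*v3 := by rw [hcb, hda] at hlin; linarith
    have hquad' : (p:ℤ) ∣ (a*v1^2 + b*v2^2 - a*v4^2 - b*v3^2) := by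
      have he : a*v1^2 + b*v2^2 - a*v4^2 - b*v3^2 = a*v1^2 + b*v2^2 - c*v3^2 - d*v4^2 := by
        rw [hcb, hda]; ring
      rw [he]; exact hquad
    exact DEG p hp kp km K α B D (by omega) hα3 h2kp hkp1 hkp3 hkm0 hkmkp hK hB hpB
      F1 F2 F4 F3 hF1 hF2 hF4 hF3 (hm14.trans hm34.symm) hm34.symm a b ha0 hb0 haB hbB
      v1 v2 v4 v3 hv1 hv2 hv4 hv3 h14 h13 (Ne.symm h34) hlin' hquad'
  -- generic case
  -- digitwise linear relation
  have hdig : ∀ j, a * F1 j + b * F2 j + (-c) * F3 j + (-d) * F4 j = 0 := by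
    apply evalZero D B
    · intro j
      have hcb' := comb_bound kp km K a b c d (F1 j) (F2 j) (F3 j) (F4 j)
        hkm0 hkmkp haB hbB hcB hdB hsum (hF1 j) (hF2 j) (hF3 j) (hF4 j)
      have he : a * F1 j + b * F2 j + (-c) * F3 j + (-d) * F4 j
          = a * F1 j + b * F2 j - c * F3 j - d * F4 j := by ring
      rw [he]
      calc |a * F1 j + b * F2 j - c * F3 j - d * F4 j| ≤ 2*kp*K := hcb'
        _ < B := by rw [hB]; linarith
    · rw [evalComb, ← hv1, ← hv2, ← hv3, ← hv4]; linarith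
  have hpt : ∀ j, c * (F3 j - F4 j) = a * (F1 j - F4 j) + b * (F2 j - F4 j) := by
    intro j; linear_combination (-1) * hdig j + (F4 j) * hsum
  -- u relations
  have hu1 : v1 - v4 = ∑ j, (F1 j - F4 j) * B ^ (j:ℕ) := by
    rw [hv1, hv4, ← Finset.sum_sub_distrib]
    exact Finset.sum_congr rfl fun j _ => by ring
  have hu2 : v2 - v4 = ∑ j, (F2 j - F4 j) * B ^ (j:ℕ) := by
    rw [hv2, hv4, ← Finset.sum_sub_distrib]
    exact Finset.sum_congr rfl fun j _ => by ring
  have hφ1abs : ∀ j, |F1 j - F4 j| ≤ K := fun j =>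
    abs_le.mpr ⟨by linarith [(hF1 j).1, (hF4 j).2], by linarith [(hF1 j).2, (hF4 j).1]⟩
  have hφ2abs : ∀ j, |F2 j - F4 j| ≤ K := fun j =>
    abs_le.mpr ⟨by linarith [(hF2 j).1, (hF4 j).2], by linarith [(hF2 j).2, (hF4 j).1]⟩
  -- norm conditions
  have n1 := normc F1 F4 hm14
  have n2 := normc F2 F4 hm24
  have n3 := normc F3 F4 hm34
  -- second-moment relations
  have e_t : c * (∑ j, F4 j * (F3 j - F4 j))
      = a * (∑ j, F4 j * (F1 j - F4 j)) + b * (∑ j, F4 j * (F2 j - F4 j)) := by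
    rw [Finset.mul_sum, Finset.mul_sum, Finset.mul_sum, ← Finset.sum_add_distrib]
    exact sum_pt _ _ fun j => by linear_combination (F4 j) * hpt j
  have e_sq : c^2 * (∑ j, (F3 j - F4 j)^2)
      = a^2 * (∑ j, (F1 j - F4 j)^2) + 2*a*b*(∑ j, (F1 j - F4 j)*(F2 j - F4 j))
        + b^2 * (∑ j, (F2 j - F4 j)^2) := by
    rw [Finset.mul_sum, Finset.mul_sum, Finset.mul_sum, Finset.mul_sum,
      ← Finset.sum_add_distrib, ← Finset.sum_add_distrib]
    exact sum_pt _ _ fun j => by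
      linear_combination (c*(F3 j - F4 j) + a*(F1 j - F4 j) + b*(F2 j - F4 j)) * hpt j
  have star : a * (∑ j, (F1 j - F4 j)^2) + b * (∑ j, (F2 j - F4 j)^2)
      = c * (∑ j, (F3 j - F4 j)^2) := by
    linear_combination a*n1 + b*n2 - c*n3 + 2*e_t
  have dstar : (a*(c-a)) * (∑ j, (F1 j - F4 j)^2)
      - 2*a*b*(∑ j, (F1 j - F4 j)*(F2 j - F4 j))
      + (b*(c-b)) * (∑ j, (F2 j - F4 j)^2) = 0 := by
    linear_combination c*star + e_sq
  -- quadratic congruence in u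
  have hlin_u : a*(v1 - v4) + b*(v2 - v4) = c*(v3 - v4) := by
    linear_combination hlin - v4 * hsum
  have hquad_u : (p:ℤ) ∣ (a*(v1-v4)^2 + b*(v2-v4)^2 - c*(v3-v4)^2) := by
    have hiden : a*(v1-v4)^2 + b*(v2-v4)^2 - c*(v3-v4)^2
        = a*v1^2 + b*v2^2 - c*v3^2 - d*v4^2 := by
      linear_combination (-2*v4) * hlin + (v4^2) * hsum
    rw [hiden]; exact hquad
  have hQdvd : (p:ℤ) ∣ ((a*(c-a))*(v1-v4)^2 - 2*a*b*((v1-v4)*(v2-v4)) + (b*(c-b))*(v2-v4)^2) := by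
    have hz : c*(v3-v4) - (a*(v1-v4)+b*(v2-v4)) = 0 := by linarith
    have hiden2 : (a*(c-a))*(v1-v4)^2 - 2*a*b*((v1-v4)*(v2-v4)) + (b*(c-b))*(v2-v4)^2
        = c*(a*(v1-v4)^2 + b*(v2-v4)^2 - c*(v3-v4)^2)
          + (c*(v3-v4) - (a*(v1-v4)+b*(v2-v4))) * (c*(v3-v4) + (a*(v1-v4)+b*(v2-v4))) := by
      ring
    rw [hiden2, hz, zero_mul, add_zero]
    exact Dvd.dvd.mul_left hquad_u c
  -- classification
  have hcls := cls_all kp (Finset.mem_Icc.mpr ⟨hkp1, hkp3⟩) km (Finset.mem_Icc.mpr ⟨hkm0, hkmkp⟩)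
    a (Finset.mem_Icc.mpr haB) b (Finset.mem_Icc.mpr hbB)
    c (Finset.mem_Icc.mpr hcB) d (Finset.mem_Icc.mpr hdB)
    ha0 hb0 hc0 hd0 hsum hca hcb
  rw [← hα] at hcls
  rcases hcls with hneg | ⟨k, hkmem, habcd3, h2k⟩ | ⟨k, hkmem, habcdk, hroot1, hroot2⟩
  · -- abcd < 0 : positive definite form
    have keyExpand : ∑ j, (2*(a*(c-a))*(F1 j - F4 j) - 2*a*b*(F2 j - F4 j))^2
        = 4*(a*(c-a))^2 * (∑ j, (F1 j - F4 j)^2)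
          - 8*(a*(c-a))*a*b*(∑ j, (F1 j - F4 j)*(F2 j - F4 j))
          + 4*a^2*b^2*(∑ j, (F2 j - F4 j)^2) := by
      simp only [Finset.mul_sum, ← Finset.sum_sub_distrib, ← Finset.sum_add_distrib]
      exact sum_pt _ _ fun j => by ring
    have key2 : ∑ j, (2*(a*(c-a))*(F1 j - F4 j) - 2*a*b*(F2 j - F4 j))^2
        = 4*(a*b*c*d) * (∑ j, (F2 j - F4 j)^2) := by
      linear_combination keyExpand + 4*(a*(c-a))*dstar
        + 4*(∑ j, (F2 j - F4 j)^2)*a*b*c*hsum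
    have hXnn : 0 ≤ ∑ j, (2*(a*(c-a))*(F1 j - F4 j) - 2*a*b*(F2 j - F4 j))^2 :=
      Finset.sum_nonneg fun j _ => sq_nonneg _
    have hS22nn : 0 ≤ ∑ j, (F2 j - F4 j)^2 := Finset.sum_nonneg fun j _ => sq_nonneg _
    have hprod : 4*(a*b*c*d) * (∑ j, (F2 j - F4 j)^2) = 0 := by
      clear * - key2 hXnn hS22nn hneg
      nlinarith [mul_nonneg (by linarith : (0:ℤ) ≤ -(4*(a*b*c*d))) hS22nn]
    have hS22 : (∑ j, (F2 j - F4 j)^2) = 0 := by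
      rcases mul_eq_zero.mp hprod with h | h
      · exfalso; clear * - h hneg; nlinarith
      · exact h
    apply h24
    have hz := sqsum _ hS22
    have : v2 - v4 = 0 := by
      rw [hu2]; exact Finset.sum_eq_zero fun j _ => by rw [hz j]; ring
    linarith
  · -- abcd = 3 k² : quadratic residue contradiction
    rw [Finset.mem_Icc] at hkmem
    have hid2 : (2*(a*(c-a))*(v1-v4) - 2*a*b*(v2-v4))^2 - 3*((2*k)*(v2-v4))^2
        = 4*(a*(c-a)) * ((a*(c-a))*(v1-v4)^2 - 2*a*b*((v1-v4)*(v2-v4)) + (b*(c-b))*(v2-v4)^2) := by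
      linear_combination 4*(v2-v4)^2*habcd3 + 4*(v2-v4)^2*(a*b*c)*hsum
    have hXdvd : (p:ℤ) ∣ ((2*(a*(c-a))*(v1-v4) - 2*a*b*(v2-v4))^2 - 3*((2*k)*(v2-v4))^2) := by
      rw [hid2]; exact Dvd.dvd.mul_left hQdvd _
    haveI : Fact p.Prime := ⟨hp⟩
    set X : ℤ := 2*(a*(c-a))*(v1-v4) - 2*a*b*(v2-v4) with hXdef
    set Y : ℤ := (2*k)*(v2-v4) with hYdef
    have h0 : ((X^2 - 3*Y^2 : ℤ) : ZMod p) = 0 := (ZMod.intCast_zmod_eq_zero_iff_dvd _ p).mpr hXdvd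
    push_cast at h0
    by_cases hY : ((Y:ℤ) : ZMod p) = 0
    · have hdY : (p:ℤ) ∣ Y := (ZMod.intCast_zmod_eq_zero_iff_dvd _ _).mp hY
      rw [hYdef] at hdY
      rcases hpI.dvd_mul.mp hdY with h2k' | hu2'
      · have : (p:ℤ) ≤ 2*k := Int.le_of_dvd (by linarith [hkmem.1]) h2k'
        linarith
      · have : v2 - v4 = 0 := hzero _ hu2' (le_trans hu2abs hMxα)
        exact h24 (by linarith)
    · apply hsq3
      refine ⟨(X:ZMod p) * ((Y:ZMod p))⁻¹, ?_⟩
      have hY2 : ((Y:ZMod p))⁻¹ * (Y:ZMod p) = 1 := ZMod.inv_mul_of_unit _ (Ne.isUnit hY)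
      have hXY : (X:ZMod p)^2 = 3*(Y:ZMod p)^2 := by linear_combination h0
      field_simp
      linear_combination -hXY
  · -- abcd = k² : rational root case
    rw [Finset.mem_Icc] at hkmem
    have hA0 : a*(c-a) ≠ 0 := mul_ne_zero ha0 (sub_ne_zero.mpr hca)
    have hprod : (p:ℤ) ∣ ((a*(c-a))*(v1-v4) - (a*b-k)*(v2-v4))
        * ((a*(c-a))*(v1-v4) - (a*b+k)*(v2-v4)) := by
      have hid3 : ((a*(c-a))*(v1-v4) - (a*b-k)*(v2-v4)) * ((a*(c-a))*(v1-v4) - (a*b+k)*(v2-v4))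
          = (a*(c-a)) * ((a*(c-a))*(v1-v4)^2 - 2*a*b*((v1-v4)*(v2-v4)) + (b*(c-b))*(v2-v4)^2) := by
        linear_combination (v2-v4)^2*habcdk + (v2-v4)^2*(a*b*c)*hsum
      rw [hid3]; exact Dvd.dvd.mul_left hQdvd _
    have hfin : ∀ r : ℤ, CheckRoot a c r α → (p:ℤ) ∣ ((a*(c-a))*(v1-v4) - r*(v2-v4)) → False := by
      intro r hcr hdvdr
      obtain ⟨hcr1, hcr2⟩ := hcr
      have hgpos : (0:ℤ) < (Int.gcd (a*(c-a)) r : ℤ) := by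
        exact_mod_cast Int.gcd_pos_of_ne_zero_left r hA0
      have hAd : ((Int.gcd (a*(c-a)) r : ℤ)) ∣ a*(c-a) := Int.gcd_dvd_left _ _
      have hrd : ((Int.gcd (a*(c-a)) r : ℤ)) ∣ r := Int.gcd_dvd_right _ _
      set g : ℤ := (Int.gcd (a*(c-a)) r : ℤ) with hgdef
      set A' : ℤ := a*(c-a) / g with hA'def
      set r' : ℤ := r / g with hr'def
      have hgA : g * A' = a*(c-a) := Int.mul_ediv_cancel' hAd
      have hgr : g * r' = r := Int.mul_ediv_cancel' hrd
      have hfac2 : (a*(c-a))*(v1-v4) - r*(v2-v4) = g * (A'*(v1-v4) - r'*(v2-v4)) := by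
        rw [← hgA, ← hgr]; ring
      rw [hfac2] at hdvdr
      rcases hpI.dvd_mul.mp hdvdr with hg | hlin2
      · have : (p:ℤ) ≤ g := Int.le_of_dvd hgpos hg
        linarith
      · have h0 : A'*(v1-v4) - r'*(v2-v4) = 0 := by
          apply hzero _ hlin2
          calc |A'*(v1-v4) - r'*(v2-v4)| ≤ (|A'| + |r'|) * Mx :=
              lin_abs_le _ _ _ _ _ hu1abs hu2abs
            _ ≤ α * Mx := mul_le_mul_of_nonneg_right hcr2 hMx0
        -- digitwise
        have hptw : ∀ j, A'*(F1 j - F4 j) - r'*(F2 j - F4 j) = 0 := by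
          apply evalZero D B
          · intro j
            calc |A'*(F1 j - F4 j) - r'*(F2 j - F4 j)| ≤ (|A'| + |r'|) * K :=
                lin_abs_le _ _ _ _ _ (hφ1abs j) (hφ2abs j)
              _ ≤ α * K := mul_le_mul_of_nonneg_right hcr2 hK0
              _ < B := by rw [hB]; linarith
          · calc ∑ j, (A'*(F1 j - F4 j) - r'*(F2 j - F4 j)) * B ^ (j:ℕ)
                = ∑ j, (A'*((F1 j - F4 j) * B ^ (j:ℕ)) - r'*((F2 j - F4 j) * B ^ (j:ℕ))) :=
                  sum_pt _ _ fun j => by ring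
              _ = A'*(∑ j, (F1 j - F4 j) * B ^ (j:ℕ)) - r'*(∑ j, (F2 j - F4 j) * B ^ (j:ℕ)) := by
                  rw [Finset.sum_sub_distrib, Finset.mul_sum, Finset.mul_sum]
              _ = A'*(v1-v4) - r'*(v2-v4) := by rw [← hu1, ← hu2]
              _ = 0 := h0
        have hpar : ∀ j, A'*(F1 j - F4 j) = r'*(F2 j - F4 j) := fun j => by
          linear_combination hptw j
        have hP := PAR A' r' (fun j => F1 j - F4 j) (fun j => F2 j - F4 j) F4 hpar n1 n2
        have hA'0 : A' ≠ 0 := by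
          intro h
          apply hA0
          rw [← hgA, h, mul_zero]
        rcases mul_eq_zero.mp hP with h1 | h2
        · rcases mul_eq_zero.mp h1 with hr0 | hAr
          · -- r' = 0 : φ1 = 0
            apply h14
            have hz : ∀ j, F1 j - F4 j = 0 := by
              intro j
              have := hpar j
              rw [hr0, zero_mul] at this
              exact (mul_eq_zero.mp this).resolve_left hA'0
            have : v1 - v4 = 0 := by
              rw [hu1]; exact Finset.sum_eq_zero fun j _ => by rw [hz j]; ring
            linarith
          · -- r' = A' : φ1 = φ2
            apply h12
            have hra : r' = A' := by linarith
            have hz : ∀ j, F1 j - F4 j = F2 j - F4 j := by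
              intro j
              have := hpar j
              rw [hra] at this
              have h3 : A' * ((F1 j - F4 j) - (F2 j - F4 j)) = 0 := by linear_combination this
              have := (mul_eq_zero.mp h3).resolve_left hA'0
              linarith
            have : (v1 - v4) - (v2 - v4) = 0 := by
              rw [hu1, hu2, ← Finset.sum_sub_distrib]
              exact Finset.sum_eq_zero fun j _ => by rw [← sub_mul, hz j]; ring
            linarith
        · -- S22 = 0
          apply h24
          have hz := sqsum _ h2
          have : v2 - v4 = 0 := by
            rw [hu2]; exact Finset.sum_eq_zero fun j _ => by rw [hz j]; ring
          linarith
    rcases hpI.dvd_mul.mp hprod with h | h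
    · exact hfin (a*b-k) hroot1 h
    · exact hfin (a*b+k) hroot2 h

end Four
section Rep

lemma rep {n : ℕ} (e : Fin n → ℤ) (h1 : 1 ≤ wt e) (h2 : wt e ≤ 2) :
    ∃ i1 i2 : Fin n, ∃ bb : ℤ, e i1 ≠ 0 ∧
      (bb = 0 ∨ (bb = e i2 ∧ e i2 ≠ 0 ∧ i1 ≠ i2)) ∧
      ∀ w : Fin n → ℤ, ∑ i, e i * w i = e i1 * w i1 + bb * w i2 := by
  classical
  set S := Finset.univ.filter (fun i => e i ≠ 0) with hSdef
  have hwt : wt e = S.card := rfl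
  have hsupp : ∀ w : Fin n → ℤ, ∑ i, e i * w i = ∑ i ∈ S, e i * w i := by
    intro w
    refine (Finset.sum_subset (Finset.subset_univ S) ?_).symm
    intro i _ hi
    have : e i = 0 := by
      by_contra h
      exact hi (Finset.mem_filter.mpr ⟨Finset.mem_univ i, h⟩)
    rw [this]; ring
  have hmem : ∀ i ∈ S, e i ≠ 0 := fun i hi => (Finset.mem_filter.mp hi).2
  rw [hwt] at h1 h2
  rcases (by omega : S.card = 1 ∨ S.card = 2) with h | h
  · obtain ⟨i, hSi⟩ := Finset.card_eq_one.mp h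
    refine ⟨i, i, 0, hmem i (by rw [hSi]; exact Finset.mem_singleton_self i), Or.inl rfl, ?_⟩
    intro w
    rw [hsupp w, hSi, Finset.sum_singleton]
    ring
  · obtain ⟨i, j, hij, hSij⟩ := Finset.card_eq_two.mp h
    have hiS : i ∈ S := by rw [hSij]; simp
    have hjS : j ∈ S := by rw [hSij]; simp
    refine ⟨i, j, e j, hmem i hiS, Or.inr ⟨rfl, hmem j hjS, hij⟩, ?_⟩
    intro w
    rw [hsupp w, hSij, Finset.sum_pair hij]

end Rep

set_option maxHeartbeats 4000000 in
theorem stmt13 (kp km : ℕ) (hkm : km ≤ kp) (hkp : kp ≤ 3) (hk1 : 1 ≤ kp + km)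
    (D K : ℕ) (hD : 2 ≤ D) (hK : 1 ≤ K)
    (p : ℕ) (hp : p.Prime) (hp12 : p % 12 = 5 ∨ p % 12 = 7)
    (hpD : (max (2 * kp ^ 2) 3 * K + 1) ^ D ≤ p)
    (m : ℕ) (hm : m < D * K ^ 2)
    (n : ℕ) (x : Fin n → ℕ) (hx : Function.Injective x)
    (hrange : Set.range x =
      {y : ℕ | ∃ f : Fin D → ℕ, (∀ i, f i ≤ K) ∧ (∑ i, (f i) ^ 2) = m ∧
        y = ∑ i, f i * (max (2 * kp ^ 2) 3 * K + 1) ^ (i : ℕ)}) :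
    (∀ e : Fin n → ℤ, (∀ i, -(km : ℤ) ≤ e i ∧ e i ≤ kp) → 1 ≤ wt e → wt e ≤ 2 →
      (∑ i, e i • ((1, (x i : ZMod p), (x i : ZMod p) ^ 2) :
        ZMod (3 * kp + 2 * km + 1) × ZMod p × ZMod p)) ≠ 0) ∧
    (∀ e e' : Fin n → ℤ,
      (∀ i, -(km : ℤ) ≤ e i ∧ e i ≤ kp) → 1 ≤ wt e → wt e ≤ 2 →
      (∀ i, -(km : ℤ) ≤ e' i ∧ e' i ≤ kp) → 1 ≤ wt e' → wt e' ≤ 2 →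
      (∑ i, e i • ((1, (x i : ZMod p), (x i : ZMod p) ^ 2) :
        ZMod (3 * kp + 2 * km + 1) × ZMod p × ZMod p)) =
      (∑ i, e' i • ((1, (x i : ZMod p), (x i : ZMod p) ^ 2) :
        ZMod (3 * kp + 2 * km + 1) × ZMod p × ZMod p)) → e = e') := by
  classical
  have hsq3 : ¬ IsSquare (3 : ZMod p) := noSq3 p hp hp12
  have hpI : Prime (p:ℤ) := Int.prime_iff_natAbs_prime.mpr (by simpa using hp)
  -- digits
  have hxmem : ∀ i : Fin n, ∃ f : Fin D → ℕ, (∀ j, f j ≤ K) ∧ (∑ j, (f j) ^ 2) = m ∧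
      x i = ∑ j, f j * (max (2 * kp ^ 2) 3 * K + 1) ^ (j : ℕ) := by
    intro i
    have hxi : x i ∈ Set.range x := ⟨i, rfl⟩
    rw [hrange] at hxi
    exact hxi
  choose F hFb hFm hFv using hxmem
  -- integer quantities
  set αZ : ℤ := max (2 * (kp:ℤ) ^ 2) 3 with hαZdef
  set BZ : ℤ := ((max (2 * kp ^ 2) 3 * K + 1 : ℕ) : ℤ) with hBZdef
  have hαcast : ((max (2 * kp ^ 2) 3 : ℕ) : ℤ) = αZ := by
    rw [hαZdef]; push_cast [Nat.cast_max]; ring_nf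
  have hBZeq : BZ = αZ * (K:ℤ) + 1 := by
    rw [hBZdef, ← hαcast]; push_cast; ring
  have hkp1 : 1 ≤ kp := by omega
  have hkp1Z : (1:ℤ) ≤ (kp:ℤ) := by exact_mod_cast hkp1
  have hkp3Z : (kp:ℤ) ≤ 3 := by exact_mod_cast hkp
  have hkm0Z : (0:ℤ) ≤ (km:ℤ) := by positivity
  have hkmkpZ : (km:ℤ) ≤ (kp:ℤ) := by exact_mod_cast hkm
  have hKZ : (1:ℤ) ≤ (K:ℤ) := by exact_mod_cast hK
  have hK0Z : (0:ℤ) ≤ (K:ℤ) := by linarith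
  have hpBZ : BZ ^ D ≤ (p:ℤ) := by rw [hBZdef]; exact_mod_cast hpD
  have hα3 : (3:ℤ) ≤ αZ := le_max_right _ _
  have hα2kp : 2*(kp:ℤ) ≤ αZ := by
    rcases le_or_gt (kp:ℤ) 1 with h | h
    · calc 2*(kp:ℤ) ≤ 3 := by linarith
        _ ≤ αZ := hα3
    · calc 2*(kp:ℤ) ≤ 2*(kp:ℤ)^2 := by nlinarith
        _ ≤ αZ := le_max_left _ _
  have hBZ4 : (4:ℤ) ≤ BZ := by clear * - hα3 hKZ hBZeq; nlinarith
  have hB2D : BZ^2 ≤ BZ^D := pow_le_pow_right₀ (by linarith) hD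
  have hpbig : (16:ℤ) ≤ p := by clear * - hBZ4 hB2D hpBZ; nlinarith
  -- digit values over ℤ
  have hvF : ∀ i, (x i : ℤ) = ∑ j, ((F i j : ℕ) : ℤ) * BZ ^ (j:ℕ) := by
    intro i
    rw [hBZdef, hFv i]
    push_cast
    ring
  have hFbZ : ∀ i j, (0:ℤ) ≤ (F i j : ℤ) ∧ (F i j : ℤ) ≤ (K:ℤ) := by
    intro i j
    constructor
    · positivity
    · exact_mod_cast hFb i j
  have hFmZ : ∀ i i', ∑ j, ((F i j : ℕ):ℤ)^2 = ∑ j, ((F i' j : ℕ):ℤ)^2 := by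
    intro i i'
    have h1 : ∑ j, ((F i j : ℕ):ℤ)^2 = (m:ℤ) := by exact_mod_cast hFm i
    have h2 : ∑ j, ((F i' j : ℕ):ℤ)^2 = (m:ℤ) := by exact_mod_cast hFm i'
    rw [h1, h2]
  -- size facts
  have hE0 : (0:ℤ) ≤ ∑ j : Fin D, BZ ^ (j:ℕ) :=
    Finset.sum_nonneg fun j _ => pow_nonneg (by linarith) _
  set Mx : ℤ := (K:ℤ) * ∑ j : Fin D, BZ ^ (j:ℕ) with hMxdef
  have hMx0 : (0:ℤ) ≤ Mx := mul_nonneg hK0Z hE0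
  have hgeom : (BZ - 1) * ∑ j : Fin D, BZ ^ (j:ℕ) = BZ^D - 1 := geomId BZ D
  have hMx : αZ * Mx = BZ^D - 1 := by
    rw [hMxdef, ← hgeom, hBZeq]; ring
  have hαMxp : αZ * Mx < (p:ℤ) := by rw [hMx]; linarith
  have hMxα : Mx ≤ αZ * Mx := by clear * - hα3 hMx0; nlinarith
  have hzero : ∀ t : ℤ, (p:ℤ) ∣ t → |t| ≤ αZ * Mx → t = 0 := fun t ht habs =>
    Int.eq_zero_of_abs_lt_dvd ht (lt_of_le_of_lt habs hαMxp)
  have hvb : ∀ i, (0:ℤ) ≤ (x i : ℤ) ∧ (x i : ℤ) ≤ Mx := by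
    intro i
    rw [hvF i]
    exact ⟨evalNonneg BZ (by linarith) _ (fun j => (hFbZ i j).1),
      evalLe BZ (by linarith) _ (K:ℤ) (fun j => (hFbZ i j).2)⟩
  have hvinj : ∀ i i' : Fin n, (x i : ℤ) = (x i' : ℤ) → i = i' :=
    fun i i' h => hx (by exact_mod_cast h)
  -- component computation
  have hcomp : ∀ e : Fin n → ℤ,
      (∑ i, e i • ((1, (x i : ZMod p), (x i : ZMod p) ^ 2) :
        ZMod (3 * kp + 2 * km + 1) × ZMod p × ZMod p))
      = (((∑ i, e i : ℤ) : ZMod (3 * kp + 2 * km + 1)),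
         ((∑ i, e i * (x i : ℤ) : ℤ) : ZMod p),
         ((∑ i, e i * (x i : ℤ)^2 : ℤ) : ZMod p)) := by
    intro e
    refine Prod.ext ?_ (Prod.ext ?_ ?_)
    · show (∑ i, e i • ((1, (x i : ZMod p), (x i : ZMod p) ^ 2) :
        ZMod (3 * kp + 2 * km + 1) × ZMod p × ZMod p)).1 = _
      rw [Prod.fst_sum]
      simp only [Prod.smul_fst, zsmul_one]
      push_cast
      rfl
    · show (∑ i, e i • ((1, (x i : ZMod p), (x i : ZMod p) ^ 2) :
        ZMod (3 * kp + 2 * km + 1) × ZMod p × ZMod p)).2.1 = _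
      rw [Prod.snd_sum, Prod.fst_sum]
      simp only [Prod.smul_snd, Prod.smul_fst, zsmul_eq_mul]
      push_cast
      rfl
    · show (∑ i, e i • ((1, (x i : ZMod p), (x i : ZMod p) ^ 2) :
        ZMod (3 * kp + 2 * km + 1) × ZMod p × ZMod p)).2.2
        = ((∑ i, e i * (x i : ℤ)^2 : ℤ) : ZMod p)
      rw [Prod.snd_sum, Prod.snd_sum]
      simp only [Prod.smul_snd, zsmul_eq_mul]
      push_cast
      rfl
  have hqcast : ((3 * kp + 2 * km + 1 : ℕ) : ℤ) = 3*(kp:ℤ) + 2*(km:ℤ) + 1 := by push_cast; ring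
  constructor
  · -- Part 1 : nonzero
    intro e hbd hw1 hw2 heq0
    rw [hcomp e] at heq0
    rw [show (0 : ZMod (3 * kp + 2 * km + 1) × ZMod p × ZMod p) = (0, 0, 0) from rfl] at heq0
    simp only [Prod.mk.injEq] at heq0
    obtain ⟨h1, h2, h3⟩ := heq0
    have hd1 : ((3 * kp + 2 * km + 1 : ℕ) : ℤ) ∣ (∑ i, e i) :=
      (ZMod.intCast_zmod_eq_zero_iff_dvd _ _).mp h1
    have hd2 : (p : ℤ) ∣ (∑ i, e i * (x i : ℤ)) :=
      (ZMod.intCast_zmod_eq_zero_iff_dvd _ _).mp h2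
    obtain ⟨i1, i2, b1, ha0, hb1, hrep⟩ := rep e hw1 hw2
    have hsum1 : (∑ i, e i) = e i1 + b1 := by
      have := hrep (fun _ => 1)
      simpa using this
    have hsumv : (∑ i, e i * (x i : ℤ)) = e i1 * (x i1 : ℤ) + b1 * (x i2 : ℤ) := hrep _
    have hai := hbd i1
    rcases hb1 with rfl | ⟨hb1e, hb10, hi12⟩
    · -- weight 1
      have hd1' : ((3 * kp + 2 * km + 1 : ℕ) : ℤ) ∣ e i1 := by
        rw [hsum1] at hd1
        simpa using hd1
      have habs : |e i1| ≤ (kp:ℤ) := abs_le.mpr ⟨by linarith [hai.1], hai.2⟩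
      have : e i1 = 0 := by
        apply Int.eq_zero_of_abs_lt_dvd hd1'
        rw [hqcast]
        linarith
      exact ha0 this
    · -- weight 2
      have hbi := hbd i2
      rw [hb1e] at hsum1 hsumv
      have hs0 : e i1 + e i2 = 0 := by
        rw [hsum1] at hd1
        have habs : |e i1 + e i2| ≤ 2*(kp:ℤ) := by
          rw [abs_le]
          exact ⟨by linarith [hai.1, hbi.1], by linarith [hai.2, hbi.2]⟩
        apply Int.eq_zero_of_abs_lt_dvd hd1
        rw [hqcast]
        linarith
      have hv0 : e i1 * ((x i1 : ℤ) - (x i2 : ℤ)) = 0 := by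
        apply hzero
        · rw [show e i1 * ((x i1:ℤ) - (x i2:ℤ)) = e i1 * (x i1:ℤ) + e i2 * (x i2:ℤ) by
            linear_combination (-(x i2 : ℤ)) * hs0]
          rw [← hsumv]; exact hd2
        · calc |e i1 * ((x i1:ℤ) - (x i2:ℤ))| = |e i1| * |(x i1:ℤ) - (x i2:ℤ)| := abs_mul _ _
            _ ≤ (kp:ℤ) * Mx := by
                apply mul_le_mul (abs_le.mpr ⟨by linarith [hai.1], hai.2⟩)
                  (abs_le.mpr ⟨by linarith [(hvb i1).1, (hvb i2).2], by linarith [(hvb i1).2, (hvb i2).1]⟩)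
                  (abs_nonneg _) (by linarith)
            _ ≤ αZ * Mx := mul_le_mul_of_nonneg_right (by linarith) hMx0
      rcases mul_eq_zero.mp hv0 with h | h
      · exact ha0 h
      · exact hi12 (hvinj i1 i2 (by linarith))
  · -- Part 2 : injectivity
    intro e e' hbd hw1 hw2 hbd' hw1' hw2' heq
    by_contra hne
    rw [hcomp e, hcomp e'] at heq
    simp only [Prod.mk.injEq] at heq
    obtain ⟨h1, h2, h3⟩ := heq
    have hd1 : ((3 * kp + 2 * km + 1 : ℕ) : ℤ) ∣ ((∑ i, e' i) - (∑ i, e i)) :=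
      Int.ModEq.dvd ((ZMod.intCast_eq_intCast_iff _ _ _).mp h1)
    have hd2 : (p : ℤ) ∣ ((∑ i, e' i * (x i : ℤ)) - (∑ i, e i * (x i : ℤ))) :=
      Int.ModEq.dvd ((ZMod.intCast_eq_intCast_iff _ _ _).mp h2)
    have hd3 : (p : ℤ) ∣ ((∑ i, e' i * (x i : ℤ)^2) - (∑ i, e i * (x i : ℤ)^2)) :=
      Int.ModEq.dvd ((ZMod.intCast_eq_intCast_iff _ _ _).mp h3)
    obtain ⟨i1, i2, b1, ha0, hb1, hrep⟩ := rep e hw1 hw2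
    obtain ⟨i3, i4, b2, hc0, hb2, hrep'⟩ := rep e' hw1' hw2'
    have hb1B : -(km:ℤ) ≤ b1 ∧ b1 ≤ (kp:ℤ) := by
      rcases hb1 with rfl | ⟨rfl, _, _⟩
      · exact ⟨by linarith, by linarith⟩
      · exact (hbd i2)
    have hb2B : -(km:ℤ) ≤ b2 ∧ b2 ≤ (kp:ℤ) := by
      rcases hb2 with rfl | ⟨rfl, _, _⟩
      · exact ⟨by linarith, by linarith⟩
      · exact (hbd' i4)
    have hsum1 : (∑ i, e i) = e i1 + b1 := by simpa using hrep (fun _ => 1)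
    have hsum1' : (∑ i, e' i) = e' i3 + b2 := by simpa using hrep' (fun _ => 1)
    -- coordinate 1 : sums equal over ℤ
    have hS1 : (∑ i, e' i) = (∑ i, e i) := by
      have h0 : (∑ i, e' i) - (∑ i, e i) = 0 := by
        have h1 := hbd i1; have h2 := hbd' i3
        have habs : |(∑ i, e' i) - (∑ i, e i)| ≤ 2*(kp:ℤ) + 2*(km:ℤ) := by
          rw [hsum1, hsum1', abs_le]
          constructor
          · linarith [h1.2, hb1B.2, h2.1, hb2B.1]
          · linarith [h1.1, hb1B.1, h2.2, hb2B.2]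
        apply Int.eq_zero_of_abs_lt_dvd hd1
        rw [hqcast]
        linarith
      linarith
    -- coordinate 2 : linear sums equal over ℤ
    have hS2 : (∑ i, e' i * (x i : ℤ)) = (∑ i, e i * (x i : ℤ)) := by
      have h0 : (∑ i, e' i * (x i : ℤ)) - (∑ i, e i * (x i : ℤ)) = 0 := by
        apply hzero _ hd2
        rw [hrep (fun i => (x i : ℤ)), hrep' (fun i => (x i : ℤ))]
        have hsum0 : e' i3 + b2 = e i1 + b1 := by rw [← hsum1, ← hsum1']; exact hS1
        have hcb := comb_bound (kp:ℤ) (km:ℤ) Mx (e' i3) b2 (e i1) b1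
          ((x i3 : ℤ)) ((x i4 : ℤ)) ((x i1 : ℤ)) ((x i2 : ℤ))
          hkm0Z hkmkpZ (hbd' i3) hb2B (hbd i1) hb1B hsum0
          (hvb i3) (hvb i4) (hvb i1) (hvb i2)
        have hre : e' i3 * (x i3:ℤ) + b2 * (x i4:ℤ) - (e i1 * (x i1:ℤ) + b1 * (x i2:ℤ))
            = e' i3 * (x i3:ℤ) + b2 * (x i4:ℤ) - e i1 * (x i1:ℤ) - b1 * (x i2:ℤ) := by ring
        rw [hre]
        calc |_| ≤ 2*(kp:ℤ)*Mx := hcb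
          _ ≤ αZ * Mx := mul_le_mul_of_nonneg_right hα2kp hMx0
      linarith
    -- difference function
    set dd : Fin n → ℤ := fun i => e i - e' i with hdddef
    have hddsum : ∀ w : Fin n → ℤ, ∑ i, dd i * w i = (∑ i, e i * w i) - (∑ i, e' i * w i) := by
      intro w
      rw [← Finset.sum_sub_distrib]
      exact Finset.sum_congr rfl fun i _ => by simp only [hdddef]; ring
    have hd0 : (∑ i, dd i) = 0 := by
      have h' := hddsum (fun _ => 1)
      simp only [mul_one] at h'
      linarith
    have hdv : (∑ i, dd i * (x i : ℤ)) = 0 := by rw [hddsum]; linarith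
    have hdq : (p:ℤ) ∣ (∑ i, dd i * (x i : ℤ)^2) := by
      rw [hddsum]
      have h' := dvd_neg.mpr hd3
      rw [neg_sub] at h'
      exact h'
    -- support of dd
    set Ae := Finset.univ.filter (fun i => e i ≠ 0) with hAedef
    set Be := Finset.univ.filter (fun i => e' i ≠ 0) with hBedef
    have hAe2 : Ae.card ≤ 2 := hw2
    have hBe2 : Be.card ≤ 2 := hw2'
    set Sd := Finset.univ.filter (fun i => dd i ≠ 0) with hSddef
    have hSdsum : ∀ w : Fin n → ℤ, ∑ i, dd i * w i = ∑ i ∈ Sd, dd i * w i := by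
      intro w
      refine (Finset.sum_subset (Finset.subset_univ Sd) ?_).symm
      intro i _ hi
      have hz : dd i = 0 := by
        by_contra h
        exact hi (Finset.mem_filter.mpr ⟨Finset.mem_univ i, h⟩)
      rw [hz]; ring
    have hSdne : Sd.Nonempty := by
      obtain ⟨i0, hi0⟩ := Function.ne_iff.mp hne
      exact ⟨i0, Finset.mem_filter.mpr ⟨Finset.mem_univ i0, sub_ne_zero.mpr hi0⟩⟩
    have hSdmem : ∀ i ∈ Sd, dd i ≠ 0 := fun i hi => (Finset.mem_filter.mp hi).2
    have hsub : Sd ⊆ Ae ∪ Be := by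
      intro i hi
      have hdi := hSdmem i hi
      rcases ne_or_eq (e i) 0 with h | h
      · exact Finset.mem_union_left _ (Finset.mem_filter.mpr ⟨Finset.mem_univ i, h⟩)
      · have : e' i ≠ 0 := by
          intro h'
          apply hdi
          simp only [hdddef, h, h', sub_zero]
        exact Finset.mem_union_right _ (Finset.mem_filter.mpr ⟨Finset.mem_univ i, this⟩)
    have hSd4 : Sd.card ≤ 4 := by
      calc Sd.card ≤ (Ae ∪ Be).card := Finset.card_le_card hsub
        _ ≤ Ae.card + Be.card := Finset.card_union_le _ _
        _ ≤ 4 := by omega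
    have hSd1 : 1 ≤ Sd.card := Finset.card_pos.mpr hSdne
    have hddB : ∀ i, |dd i| ≤ (kp:ℤ) + (km:ℤ) := by
      intro i
      have h1 := hbd i; have h2 := hbd' i
      rw [abs_le]
      constructor
      · simp only [hdddef]; linarith [h1.1, h2.2]
      · simp only [hdddef]; linarith [h1.2, h2.1]
    rcases (by omega : Sd.card = 1 ∨ Sd.card = 2 ∨ Sd.card = 3 ∨ Sd.card = 4) with h | h | h | h
    · -- one nonzero coefficient
      obtain ⟨i, hSi⟩ := Finset.card_eq_one.mp h
      have hdi : dd i ≠ 0 := hSdmem i (by rw [hSi]; exact Finset.mem_singleton_self i)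
      apply hdi
      have h' := hSdsum (fun _ => 1)
      rw [hSi, Finset.sum_singleton] at h'
      simp only [mul_one] at h'
      linarith
    · -- two nonzero coefficients
      obtain ⟨i, j, hij, hSij⟩ := Finset.card_eq_two.mp h
      have hdi : dd i ≠ 0 := hSdmem i (by rw [hSij]; simp)
      have E1 : dd i + dd j = 0 := by
        have h' := hSdsum (fun _ => 1)
        rw [hSij, Finset.sum_pair hij] at h'
        simp only [mul_one] at h'
        linarith
      have E2 : dd i * (x i:ℤ) + dd j * (x j:ℤ) = 0 := by
        have h' := hSdsum (fun i' => (x i' : ℤ))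
        rw [hSij, Finset.sum_pair hij] at h'
        linarith
      have hfac : dd i * ((x i:ℤ) - (x j:ℤ)) = 0 := by
        linear_combination E2 - (x j:ℤ) * E1
      rcases mul_eq_zero.mp hfac with h' | h'
      · exact hdi h'
      · exact hij (hvinj i j (by linarith))
    · -- three nonzero coefficients
      obtain ⟨i, j, k, hij, hik, hjk, hS3⟩ := Finset.card_eq_three.mp h
      have hsum3 : ∀ w : Fin n → ℤ,
          ∑ i' ∈ Sd, dd i' * w i' = dd i * w i + dd j * w j + dd k * w k := by
        intro w
        rw [hS3, Finset.sum_insert (by simp [hij, hik]),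
          Finset.sum_insert (by simp [hjk]), Finset.sum_singleton]
        ring
      have hdj : dd j ≠ 0 := hSdmem j (by rw [hS3]; simp)
      have E1 : dd i + dd j + dd k = 0 := by
        have h' := hSdsum (fun _ => 1)
        rw [hsum3 (fun _ => 1)] at h'
        simp only [mul_one] at h'
        linarith
      have E2 : dd i * (x i:ℤ) + dd j * (x j:ℤ) + dd k * (x k:ℤ) = 0 := by
        have h' := hSdsum (fun i' => (x i' : ℤ))
        rw [hsum3] at h'
        linarith
      have E3 : (p:ℤ) ∣ (dd i * (x i:ℤ)^2 + dd j * (x j:ℤ)^2 + dd k * (x k:ℤ)^2) := by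
        have h' := hSdsum (fun i' => (x i' : ℤ)^2)
        rw [hsum3] at h'
        rw [← h']
        exact hdq
      have hident : dd j * (((x j:ℤ) - (x k:ℤ)) * ((x j:ℤ) - (x i:ℤ)))
          = dd i * (x i:ℤ)^2 + dd j * (x j:ℤ)^2 + dd k * (x k:ℤ)^2 := by
        linear_combination (-((x i:ℤ) + (x k:ℤ))) * E2 + ((x k:ℤ) * (x i:ℤ)) * E1
      have E3' : (p:ℤ) ∣ dd j * (((x j:ℤ) - (x k:ℤ)) * ((x j:ℤ) - (x i:ℤ))) := by
        rw [hident]; exact E3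
      rcases hpI.dvd_mul.mp E3' with h' | h'
      · have : (p:ℤ) ≤ |dd j| := Int.le_of_dvd (abs_pos.mpr hdj) ((dvd_abs _ _).mpr h')
        have := hddB j
        linarith
      rcases hpI.dvd_mul.mp h' with h'' | h''
      · have hz : (x j:ℤ) - (x k:ℤ) = 0 := by
          apply hzero _ h''
          have h1 := hvb j; have h2 := hvb k
          rw [abs_le]
          constructor
          · linarith [h1.1, h2.2]
          · linarith [h1.2, h2.1]
        exact hjk (hvinj j k (by linarith))
      · have hz : (x j:ℤ) - (x i:ℤ) = 0 := by
          apply hzero _ h''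
          have h1 := hvb j; have h2 := hvb i
          rw [abs_le]
          constructor
          · linarith [h1.1, h2.2]
          · linarith [h1.2, h2.1]
        exact hij (hvinj j i (by linarith)).symm
    · -- four nonzero coefficients : disjoint supports
      have h4le : 4 ≤ (Ae ∪ Be).card := h ▸ Finset.card_le_card hsub
      have hui := Finset.card_union_add_card_inter Ae Be
      have hAe2' : Ae.card = 2 := by omega
      have hBe2' : Be.card = 2 := by omega
      have hie : (Ae ∩ Be).card = 0 := by omega
      have hiem : Ae ∩ Be = ∅ := Finset.card_eq_zero.mp hie
      have hdisj : ∀ i'', i'' ∈ Ae → i'' ∈ Be → False := by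
        intro i'' hA hB
        have : i'' ∈ Ae ∩ Be := Finset.mem_inter.mpr ⟨hA, hB⟩
        rw [hiem] at this
        exact Finset.notMem_empty _ this
      obtain ⟨j1, j2, h12', hAe⟩ := Finset.card_eq_two.mp hAe2'
      obtain ⟨j3, j4, h34', hBe⟩ := Finset.card_eq_two.mp hBe2'
      have hj1A : j1 ∈ Ae := by rw [hAe]; simp
      have hj2A : j2 ∈ Ae := by rw [hAe]; simp
      have hj3B : j3 ∈ Be := by rw [hBe]; simp
      have hj4B : j4 ∈ Be := by rw [hBe]; simp
      have he1 : e j1 ≠ 0 := (Finset.mem_filter.mp hj1A).2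
      have he2 : e j2 ≠ 0 := (Finset.mem_filter.mp hj2A).2
      have he3 : e' j3 ≠ 0 := (Finset.mem_filter.mp hj3B).2
      have he4 : e' j4 ≠ 0 := (Finset.mem_filter.mp hj4B).2
      have h31 : j3 ≠ j1 := fun h' => hdisj j1 hj1A (h' ▸ hj3B)
      have h32 : j3 ≠ j2 := fun h' => hdisj j2 hj2A (h' ▸ hj3B)
      have h41 : j4 ≠ j1 := fun h' => hdisj j1 hj1A (h' ▸ hj4B)
      have h42 : j4 ≠ j2 := fun h' => hdisj j2 hj2A (h' ▸ hj4B)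
      have hsupE : ∀ w : Fin n → ℤ, ∑ i, e i * w i = e j1 * w j1 + e j2 * w j2 := by
        intro w
        have h' : ∑ i, e i * w i = ∑ i ∈ Ae, e i * w i := by
          refine (Finset.sum_subset (Finset.subset_univ Ae) ?_).symm
          intro i _ hi
          have hz : e i = 0 := by
            by_contra hcon
            exact hi (Finset.mem_filter.mpr ⟨Finset.mem_univ i, hcon⟩)
          rw [hz]; ring
        rw [h', hAe, Finset.sum_pair h12']
      have hsupE' : ∀ w : Fin n → ℤ, ∑ i, e' i * w i = e' j3 * w j3 + e' j4 * w j4 := by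
        intro w
        have h' : ∑ i, e' i * w i = ∑ i ∈ Be, e' i * w i := by
          refine (Finset.sum_subset (Finset.subset_univ Be) ?_).symm
          intro i _ hi
          have hz : e' i = 0 := by
            by_contra hcon
            exact hi (Finset.mem_filter.mpr ⟨Finset.mem_univ i, hcon⟩)
          rw [hz]; ring
        rw [h', hBe, Finset.sum_pair h34']
      have hsum4 : e j1 + e j2 = e' j3 + e' j4 := by
        have ha := hsupE (fun _ => 1)
        have hb := hsupE' (fun _ => 1)
        simp only [mul_one] at ha hb
        linarith
      have hlin4 : e j1 * (x j1:ℤ) + e j2 * (x j2:ℤ) = e' j3 * (x j3:ℤ) + e' j4 * (x j4:ℤ) := by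
        have ha := hsupE (fun i => (x i:ℤ))
        have hb := hsupE' (fun i => (x i:ℤ))
        linarith
      have hquad4 : (p:ℤ) ∣ (e j1 * (x j1:ℤ)^2 + e j2 * (x j2:ℤ)^2
          - e' j3 * (x j3:ℤ)^2 - e' j4 * (x j4:ℤ)^2) := by
        have ha := hsupE (fun i => (x i:ℤ)^2)
        have hb := hsupE' (fun i => (x i:ℤ)^2)
        have h' := dvd_neg.mpr hd3
        rw [neg_sub] at h'
        have he : e j1 * (x j1:ℤ)^2 + e j2 * (x j2:ℤ)^2
            - e' j3 * (x j3:ℤ)^2 - e' j4 * (x j4:ℤ)^2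
            = (∑ i, e i * (x i : ℤ)^2) - (∑ i, e' i * (x i : ℤ)^2) := by
          rw [ha, hb]; ring
        rw [he]
        exact h'
      exact FOUR p hp hsq3 (kp:ℤ) (km:ℤ) (K:ℤ) αZ BZ D hD hαZdef hkp1Z hkp3Z
        hkm0Z hkmkpZ hKZ hBZeq hpBZ
        (fun j => ((F j1 j : ℕ):ℤ)) (fun j => ((F j2 j : ℕ):ℤ))
        (fun j => ((F j3 j : ℕ):ℤ)) (fun j => ((F j4 j : ℕ):ℤ))
        (hFbZ j1) (hFbZ j2) (hFbZ j3) (hFbZ j4)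
        (hFmZ j1 j4) (hFmZ j2 j4) (hFmZ j3 j4)
        (e j1) (e j2) (e' j3) (e' j4) he1 he2 he3 he4
        (hbd j1) (hbd j2) (hbd' j3) (hbd' j4) hsum4
        ((x j1:ℤ)) ((x j2:ℤ)) ((x j3:ℤ)) ((x j4:ℤ))
        (hvF j1) (hvF j2) (hvF j3) (hvF j4)
        (fun h' => h12' (hvinj _ _ h'))
        (fun h' => (h31 (hvinj _ _ h'.symm)))
        (fun h' => (h41 (hvinj _ _ h'.symm)))
        (fun h' => (h32 (hvinj _ _ h'.symm)))
        (fun h' => (h42 (hvinj _ _ h'.symm)))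
        (fun h' => (h34' (hvinj _ _ h')).elim)
        hlin4 hquad4
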